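/- Suppose that for every i < n the function x ↦ ∫₀ˣ |A_{i,i+1}(t)| dt is strictly increasing on [0,1]. Then: (i) for all f_0,…,f_n ∈ L¹([0,1];ℂ) there exist g ∈ L¹([0,1];ℂ) and μ_0,…,μ_{n−1} ∈ ℂ such that for every Y ∈ C_A^n[0,1], Σ_{i=0}^n ∫₀¹ f_i conj(Y_i) dx = ∫₀¹ g conj(Y_n) dx + Σ_{i=0}^{n−1} μ_i conj(Y_i(0)); (ii) conversely, for every g ∈ L¹([0,1];ℂ) and μ_0,…,μ_{n−1} ∈ ℂ there exist f_0,…,f_n ∈ L¹([0,1];ℂ) such that the same identity holds for every Y ∈ C_A^n[0,1]. -/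

import Mathlib

open MeasureTheory Set
noncomputable section
open ComplexConjugate NNReal

/-- Membership in the space `C_A^k[0,1]`. -/
def MemC (A : ℕ → ℕ → ℝ → ℂ) (k : ℕ) (Y : ℕ → ℝ → ℂ) : Prop :=
  (∀ i ≤ k, ContinuousOn (Y i) (Set.Icc 0 1)) ∧
  (∀ i < k, IntegrableOn (fun t => ∑ j ∈ Finset.range (i+2), A i j t * Y j t) (Set.Icc 0 1)) ∧
  (∀ i < k, ∀ x ∈ Set.Icc (0:ℝ) 1,
    Y i x = Y i 0 + ∫ t in (0:ℝ)..x, ∑ j ∈ Finset.range (i+2), A i j t * Y j t)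


lemma conj_intervalIntegral (f : ℝ → ℂ) (a b : ℝ) :
    ∫ t in a..b, conj (f t) = conj (∫ t in a..b, f t) := by
  simp [intervalIntegral, ← integral_conj]

lemma integrable_conj' {f : ℝ → ℂ} {μ : Measure ℝ} (h : Integrable f μ) :
    Integrable (fun x => conj (f x)) μ := by
  refine ⟨RCLike.continuous_conj.comp_aestronglyMeasurable h.1, ?_⟩
  simpa [HasFiniteIntegral] using h.2

lemma fub {f B : ℝ → ℂ} (hf : Integrable f) (hB : Integrable B) :
    ∫ x in Icc (0:ℝ) 1, f x * ∫ t in (0:ℝ)..x, B t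
      = ∫ t in Icc (0:ℝ) 1, (∫ x in t..(1:ℝ), f x) * B t := by
  set S : Set (ℝ × ℝ) := {p | 0 < p.2 ∧ p.2 ≤ p.1} with hSdef
  have hS : MeasurableSet S :=
    (measurableSet_lt measurable_const measurable_snd).inter
      (measurableSet_le measurable_snd measurable_fst)
  set Φ : ℝ × ℝ → ℂ := S.indicator (fun p => f p.1 * B p.2) with hΦdef
  have hΦint : Integrable Φ ((volume.restrict (Icc (0:ℝ) 1)).prod (volume.restrict (Icc (0:ℝ) 1))) :=
    ((hf.restrict (s := Icc 0 1)).mul_prod (hB.restrict (s := Icc 0 1))).indicator hS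
  have swap := integral_integral_swap (f := fun x t => Φ (x, t)) (by exact hΦint)
  have h1 : ∫ x in Icc (0:ℝ) 1, f x * ∫ t in (0:ℝ)..x, B t
      = ∫ x in Icc (0:ℝ) 1, ∫ t in Icc (0:ℝ) 1, Φ (x, t) := by
    refine setIntegral_congr_fun measurableSet_Icc (fun x hx => ?_)
    have hx0 : (0:ℝ) ≤ x := hx.1
    have : (fun t => Φ (x, t)) = fun t => f x * (Ioc (0:ℝ) x).indicator B t := by
      funext t
      by_cases ht : t ∈ Ioc (0:ℝ) x
      · rw [indicator_of_mem ht, hΦdef, indicator_of_mem]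
        exact ⟨ht.1, ht.2⟩
      · rw [indicator_of_notMem ht, mul_zero, hΦdef, indicator_of_notMem]
        exact fun hmem => ht ⟨hmem.1, hmem.2⟩
    rw [this, integral_const_mul, setIntegral_indicator measurableSet_Ioc,
      inter_eq_self_of_subset_right (Ioc_subset_Icc_self.trans (Icc_subset_Icc_right hx.2)),
      intervalIntegral.integral_of_le hx0]
  have h2 : ∫ t in Icc (0:ℝ) 1, ∫ x in Icc (0:ℝ) 1, Φ (x, t)
      = ∫ t in Icc (0:ℝ) 1, (∫ x in t..(1:ℝ), f x) * B t := by
    rw [integral_Icc_eq_integral_Ioc, integral_Icc_eq_integral_Ioc]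
    refine setIntegral_congr_fun measurableSet_Ioc (fun t ht => ?_)
    have h0t : (0:ℝ) < t := ht.1
    have : (fun x => Φ (x, t)) = fun x => (Ici t).indicator f x * B t := by
      funext x
      by_cases hx : x ∈ Ici t
      · rw [indicator_of_mem hx, hΦdef, indicator_of_mem]
        exact ⟨h0t, hx⟩
      · rw [indicator_of_notMem hx, zero_mul, hΦdef, indicator_of_notMem]
        exact fun hmem => hx hmem.2
    rw [this, integral_mul_const, setIntegral_indicator measurableSet_Ici, show Icc (0:ℝ) 1 ∩ Ici t = Icc t 1 by
        ext y; simp only [mem_inter_iff, mem_Icc, mem_Ici]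
        exact ⟨fun h => ⟨h.2, h.1.2⟩, fun h => ⟨⟨h0t.le.trans h.1, h.2⟩, h.1⟩⟩,
      integral_Icc_eq_integral_Ioc, ← intervalIntegral.integral_of_le ht.2]
  rw [h1, ← h2]
  have : ∫ x in Icc (0:ℝ) 1, ∫ t in Icc (0:ℝ) 1, Φ (x, t)
      = ∫ t in Icc (0:ℝ) 1, ∫ x in Icc (0:ℝ) 1, Φ (x, t) := swap
  exact this

lemma norm_intervalIntegral_le_global {φ : ℝ → ℂ} (hφ : Integrable φ) (a b : ℝ) :
    ‖∫ t in a..b, φ t‖ ≤ ∫ t, ‖φ t‖ := by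
  refine (intervalIntegral.norm_integral_le_integral_norm_uIoc).trans ?_
  exact setIntegral_le_integral hφ.norm (ae_of_all _ fun t => norm_nonneg _)

lemma intmul {φ ψ : ℝ → ℂ} (hφ : IntegrableOn φ (Icc 0 1))
    (hmeas : AEStronglyMeasurable ψ (volume.restrict (Icc (0:ℝ) 1))) (c : ℝ)
    (hb : ∀ x ∈ Icc (0:ℝ) 1, ‖ψ x‖ ≤ c) :
    IntegrableOn (fun x => φ x * ψ x) (Icc (0:ℝ) 1) := by
  have := hφ.bdd_mul (c := c) hmeas ((ae_restrict_iff' measurableSet_Icc).2 (ae_of_all _ hb))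
  exact this.congr (ae_of_all _ fun x => mul_comm _ _)

lemma cont_primitive_right {φ : ℝ → ℂ} (hφ : Integrable φ) :
    Continuous fun t => ∫ s in t..(1:ℝ), φ s := by
  have c1 := hφ.continuous_primitive 1
  have : (fun t => ∫ s in t..(1:ℝ), φ s) = fun t => -∫ s in (1:ℝ)..t, φ s := by
    funext t; rw [intervalIntegral.integral_symm]
  rw [this]; exact c1.neg


lemma core (n : ℕ) (A : ℕ → ℕ → ℝ → ℂ) (hA : ∀ i j, IntegrableOn (A i j) (Icc 0 1))
    (h : ℕ → ℝ → ℂ) (hh : ∀ i, Integrable (h i)) (Y : ℕ → ℝ → ℂ) (hY : MemC A n Y)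
    (i : ℕ) (hi : i < n) :
    ∫ x in Icc (0:ℝ) 1, h i x * star (Y i x)
      = (∫ x in Icc (0:ℝ) 1, h i x) * star (Y i 0)
        + ∑ j ∈ Finset.range (i+2), ∫ t in Icc (0:ℝ) 1,
            ((∫ s in t..(1:ℝ), h i s) * star (A i j t)) * star (Y j t) := by
  obtain ⟨hYc, hYint, hYeq⟩ := hY
  set S : ℝ → ℂ := fun t => ∑ j ∈ Finset.range (i+2), A i j t * Y j t with hSdef
  have hS : IntegrableOn S (Icc 0 1) := hYint i hi
  have hSc : Integrable ((Icc (0:ℝ) 1).indicator (fun t => conj (S t))) :=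
    IntegrableOn.integrable_indicator (integrable_conj' hS) measurableSet_Icc
  set Ind : ℝ → ℂ := (Icc (0:ℝ) 1).indicator (fun t => conj (S t)) with hInddef
  set P : ℝ → ℂ := fun x => ∫ t in (0:ℝ)..x, Ind t with hPdef
  have hPc : Continuous P := hSc.continuous_primitive 0
  have hPb : ∀ x, ‖P x‖ ≤ ∫ t, ‖Ind t‖ := fun x => norm_intervalIntegral_le_global hSc 0 x
  have step1 : ∫ x in Icc (0:ℝ) 1, h i x * star (Y i x)
      = ∫ x in Icc (0:ℝ) 1, (h i x * star (Y i 0) + h i x * P x) := by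
    refine setIntegral_congr_fun measurableSet_Icc (fun x hx => ?_)
    have hY3 := hYeq i hi x hx
    have hP : P x = conj (∫ t in (0:ℝ)..x, S t) := by
      rw [← conj_intervalIntegral]
      refine intervalIntegral.integral_congr (fun t ht => ?_)
      have ht' : t ∈ Icc (0:ℝ) 1 := by
        rw [uIcc_of_le hx.1] at ht
        exact ⟨ht.1, ht.2.trans hx.2⟩
      rw [hInddef, indicator_of_mem ht']
    have : star (Y i x) = star (Y i 0) + P x := by
      rw [hY3, star_add, hP]; rfl
    rw [this, mul_add]
  have ia : IntegrableOn (fun x => h i x * star (Y i 0)) (Icc (0:ℝ) 1) :=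
    ((hh i).restrict).mul_const _
  have ib : IntegrableOn (fun x => h i x * P x) (Icc (0:ℝ) 1) :=
    intmul ((hh i).restrict) hPc.aestronglyMeasurable _ (fun x _ => hPb x)
  rw [step1, integral_add ia ib, integral_mul_const]
  congr 1
  have step3 : ∫ x in Icc (0:ℝ) 1, h i x * P x
      = ∫ t in Icc (0:ℝ) 1, (∫ s in t..(1:ℝ), h i s) * Ind t := fub (hh i) hSc
  rw [step3]
  have step4 : ∫ t in Icc (0:ℝ) 1, (∫ s in t..(1:ℝ), h i s) * Ind t
      = ∫ t in Icc (0:ℝ) 1, ∑ j ∈ Finset.range (i+2),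
          ((∫ s in t..(1:ℝ), h i s) * star (A i j t)) * star (Y j t) := by
    refine setIntegral_congr_fun measurableSet_Icc (fun t ht => ?_)
    rw [hInddef, indicator_of_mem ht, hSdef]
    show (∫ s in t..(1:ℝ), h i s) * conj (∑ j ∈ Finset.range (i+2), A i j t * Y j t) = _
    rw [map_sum, Finset.mul_sum]
    refine Finset.sum_congr rfl (fun j _ => ?_)
    show (∫ s in t..(1:ℝ), h i s) * conj (A i j t * Y j t) = _
    rw [map_mul, ← mul_assoc]
    rfl
  rw [step4]
  refine integral_finset_sum _ (fun j hj => ?_)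
  have hjn : j ≤ n := by
    have := Finset.mem_range.mp hj
    omega
  have e1 : IntegrableOn (fun t => (∫ s in t..(1:ℝ), h i s) * conj (A i j t)) (Icc (0:ℝ) 1) := by
    refine (integrable_conj' (hA i j)).bdd_mul (c := ∫ s, ‖h i s‖)
      (cont_primitive_right (hh i)).aestronglyMeasurable.restrict
      (ae_of_all _ (fun t => norm_intervalIntegral_le_global (hh i) t 1))
  obtain ⟨c, hc⟩ := isCompact_Icc.exists_bound_of_continuousOn (hYc j hjn)
  refine intmul e1 ?_ c ?_
  · exact RCLike.continuous_conj.comp_aestronglyMeasurable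
      ((hYc j hjn).aestronglyMeasurable measurableSet_Icc)
  · intro x hx
    rw [norm_star]
    exact hc x hx

section KEY
variable {n : ℕ} {A : ℕ → ℕ → ℝ → ℂ} {Y : ℕ → ℝ → ℂ}

lemma starY_meas (hY : MemC A n Y) {j : ℕ} (hj : j ≤ n) :
    AEStronglyMeasurable (fun x => star (Y j x)) (volume.restrict (Icc (0:ℝ) 1)) :=
  RCLike.continuous_conj.comp_aestronglyMeasurable
    ((hY.1 j hj).aestronglyMeasurable measurableSet_Icc)

lemma starY_bdd (hY : MemC A n Y) {j : ℕ} (hj : j ≤ n) :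
    ∃ c : ℝ, ∀ x ∈ Icc (0:ℝ) 1, ‖(star (Y j x) : ℂ)‖ ≤ c := by
  obtain ⟨c, hc⟩ := isCompact_Icc.exists_bound_of_continuousOn (hY.1 j hj)
  exact ⟨c, fun x hx => by rw [norm_star]; exact hc x hx⟩

lemma intHA (hA : ∀ i j, IntegrableOn (A i j) (Icc 0 1)) {h : ℝ → ℂ} (hh : Integrable h)
    (k j : ℕ) :
    IntegrableOn (fun x => (∫ s in x..(1:ℝ), h s) * star (A k j x)) (Icc (0:ℝ) 1) :=
  (integrable_conj' (hA k j)).bdd_mul (c := ∫ s, ‖h s‖)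
    (cont_primitive_right hh).aestronglyMeasurable.restrict
    (ae_of_all _ (fun t => norm_intervalIntegral_le_global hh t 1))

lemma key (hA : ∀ i j, IntegrableOn (A i j) (Icc 0 1))
    (h : ℕ → ℝ → ℂ) (hh : ∀ i, Integrable (h i)) (hY : MemC A n Y) :
    ∑ j ∈ Finset.range (n+1), ∫ x in Icc (0:ℝ) 1,
        ((if j < n then h j x else 0)
          - ∑ k ∈ Finset.range n,
              (if j ≤ k+1 then (∫ s in x..(1:ℝ), h k s) * star (A k j x) else 0))
          * star (Y j x)
      = ∑ j ∈ Finset.range n, (∫ x in Icc (0:ℝ) 1, h j x) * star (Y j 0) := by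
  -- integrability of pieces
  have hjle : ∀ j ∈ Finset.range (n+1), j ≤ n := fun j hj => by
    have := Finset.mem_range.mp hj; omega
  have iu : ∀ j ≤ n, IntegrableOn
      (fun x => (if j < n then h j x else 0) * star (Y j x)) (Icc (0:ℝ) 1) := by
    intro j hj
    by_cases hjn : j < n
    · simp only [if_pos hjn]
      obtain ⟨c, hc⟩ := starY_bdd hY hj
      exact intmul ((hh j).restrict) (starY_meas hY hj) c hc
    · simp only [if_neg hjn, zero_mul]
      exact integrable_zero _ _ _
  have ivk : ∀ j ≤ n, ∀ k : ℕ, IntegrableOn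
      (fun x => (if j ≤ k+1 then (∫ s in x..(1:ℝ), h k s) * star (A k j x) else 0)
        * star (Y j x)) (Icc (0:ℝ) 1) := by
    intro j hj k
    by_cases hjk : j ≤ k+1
    · simp only [if_pos hjk]
      obtain ⟨c, hc⟩ := starY_bdd hY hj
      exact intmul (intHA hA (hh k) k j) (starY_meas hY hj) c hc
    · simp only [if_neg hjk, zero_mul]
      exact integrable_zero _ _ _
  have iv : ∀ j ≤ n, IntegrableOn
      (fun x => (∑ k ∈ Finset.range n,
        (if j ≤ k+1 then (∫ s in x..(1:ℝ), h k s) * star (A k j x) else 0))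
        * star (Y j x)) (Icc (0:ℝ) 1) := by
    intro j hj
    have : (fun x => (∑ k ∈ Finset.range n,
        (if j ≤ k+1 then (∫ s in x..(1:ℝ), h k s) * star (A k j x) else 0)) * star (Y j x))
        = fun x => ∑ k ∈ Finset.range n,
          (if j ≤ k+1 then (∫ s in x..(1:ℝ), h k s) * star (A k j x) else 0) * star (Y j x) := by
      funext x; rw [Finset.sum_mul]
    rw [this]
    exact integrable_finset_sum _ (fun k _ => ivk j hj k)
  -- split each integral
  have split : ∀ j ∈ Finset.range (n+1),
      ∫ x in Icc (0:ℝ) 1,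
        ((if j < n then h j x else 0)
          - ∑ k ∈ Finset.range n,
              (if j ≤ k+1 then (∫ s in x..(1:ℝ), h k s) * star (A k j x) else 0))
          * star (Y j x)
      = (∫ x in Icc (0:ℝ) 1, (if j < n then h j x else 0) * star (Y j x))
        - ∫ x in Icc (0:ℝ) 1, (∑ k ∈ Finset.range n,
            (if j ≤ k+1 then (∫ s in x..(1:ℝ), h k s) * star (A k j x) else 0))
            * star (Y j x) := by
    intro j hj
    rw [← integral_sub (iu j (hjle j hj)) (iv j (hjle j hj))]
    congr 1; funext x; ring
  rw [Finset.sum_congr rfl split, Finset.sum_sub_distrib]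
  -- first sum
  have T1 : ∑ j ∈ Finset.range (n+1),
      ∫ x in Icc (0:ℝ) 1, (if j < n then h j x else 0) * star (Y j x)
      = ∑ j ∈ Finset.range n, ∫ x in Icc (0:ℝ) 1, h j x * star (Y j x) := by
    rw [Finset.sum_range_succ]
    have : (∫ x in Icc (0:ℝ) 1, (if n < n then h n x else 0) * star (Y n x)) = 0 := by
      simp
    rw [this, add_zero]
    refine Finset.sum_congr rfl (fun j hj => ?_)
    have := Finset.mem_range.mp hj
    simp only [if_pos this]
  -- second sum
  have T2 : ∑ j ∈ Finset.range (n+1),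
      ∫ x in Icc (0:ℝ) 1, (∑ k ∈ Finset.range n,
        (if j ≤ k+1 then (∫ s in x..(1:ℝ), h k s) * star (A k j x) else 0)) * star (Y j x)
      = ∑ k ∈ Finset.range n, ∑ j ∈ Finset.range (k+2),
          ∫ x in Icc (0:ℝ) 1, ((∫ s in x..(1:ℝ), h k s) * star (A k j x)) * star (Y j x) := by
    have e1 : ∀ j ∈ Finset.range (n+1),
        ∫ x in Icc (0:ℝ) 1, (∑ k ∈ Finset.range n,
          (if j ≤ k+1 then (∫ s in x..(1:ℝ), h k s) * star (A k j x) else 0)) * star (Y j x)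
        = ∑ k ∈ Finset.range n, (if j ≤ k+1 then
            ∫ x in Icc (0:ℝ) 1, ((∫ s in x..(1:ℝ), h k s) * star (A k j x)) * star (Y j x)
          else 0) := by
      intro j hj
      have : (fun x => (∑ k ∈ Finset.range n,
          (if j ≤ k+1 then (∫ s in x..(1:ℝ), h k s) * star (A k j x) else 0)) * star (Y j x))
          = fun x => ∑ k ∈ Finset.range n,
            (if j ≤ k+1 then (∫ s in x..(1:ℝ), h k s) * star (A k j x) else 0) * star (Y j x) := by
        funext x; rw [Finset.sum_mul]
      rw [this, integral_finset_sum _ (fun k _ => ivk j (hjle j hj) k)]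
      refine Finset.sum_congr rfl (fun k _ => ?_)
      by_cases hjk : j ≤ k+1
      · simp only [if_pos hjk]
      · simp only [if_neg hjk, zero_mul, integral_zero]
    rw [Finset.sum_congr rfl e1, Finset.sum_comm]
    refine Finset.sum_congr rfl (fun k hk => ?_)
    have hk' : k < n := Finset.mem_range.mp hk
    have hsub : Finset.range (k+2) ⊆ Finset.range (n+1) := by
      apply Finset.range_subset_range.2; omega
    rw [← Finset.sum_subset hsub (fun j _ hj => ?_)]
    · refine Finset.sum_congr rfl (fun j hj => ?_)
      have : j ≤ k+1 := by have := Finset.mem_range.mp hj; omega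
      rw [if_pos this]
    · have : ¬ (j ≤ k+1) := by
        intro hc
        exact hj (Finset.mem_range.mpr (by omega))
      rw [if_neg this]
  rw [T1, T2]
  -- apply core
  have := Finset.sum_congr rfl (fun j hj => core n A hA h hh Y hY j (Finset.mem_range.mp hj))
  rw [this, Finset.sum_add_distrib]
  ring


end KEY


noncomputable section
namespace Volt
variable {N : ℕ}

def appB (B : Fin N → Fin N → ℝ → ℂ) (F : ℝ → Fin N → ℂ) (i : Fin N) : ℝ → ℂ :=
  fun t => ∑ k, B i k t * F t k

def mB (B : Fin N → Fin N → ℝ → ℂ) : ℝ → ℝ := fun t => ∑ i, ∑ k, ‖B i k t‖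

lemma mB_nonneg (B : Fin N → Fin N → ℝ → ℂ) (t : ℝ) : 0 ≤ mB B t :=
  Finset.sum_nonneg fun _ _ => Finset.sum_nonneg fun _ _ => norm_nonneg _

lemma mB_int {B : Fin N → Fin N → ℝ → ℂ} (hB : ∀ i k, Integrable (B i k)) :
    Integrable (mB B) :=
  integrable_finset_sum _ fun i _ => integrable_finset_sum _ fun k _ => (hB i k).norm

lemma appB_int {B : Fin N → Fin N → ℝ → ℂ} (hB : ∀ i k, Integrable (B i k))
    {F : ℝ → Fin N → ℂ} (hFc : Continuous F) {d : ℝ} (hFb : ∀ t k, ‖F t k‖ ≤ d) (i : Fin N) :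
    Integrable (appB B F i) := by
  refine integrable_finset_sum _ fun k _ => ?_
  have := (hB i k).bdd_mul (c := d)
    ((continuous_apply k).comp hFc).aestronglyMeasurable (ae_of_all _ fun t => hFb t k)
  simpa [mul_comm] using this

lemma appB_le (B : Fin N → Fin N → ℝ → ℂ) (F : ℝ → Fin N → ℂ) (i : Fin N) (t : ℝ)
    {d : ℝ} (hd : 0 ≤ d) (hFb : ∀ k, ‖F t k‖ ≤ d) : ‖appB B F i t‖ ≤ mB B t * d := by
  calc ‖∑ k, B i k t * F t k‖ ≤ ∑ k, ‖B i k t * F t k‖ := norm_sum_le _ _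
    _ ≤ ∑ k, ‖B i k t‖ * d := Finset.sum_le_sum fun k _ => by
        rw [norm_mul]; exact mul_le_mul_of_nonneg_left (hFb k) (norm_nonneg _)
    _ = (∑ k, ‖B i k t‖) * d := (Finset.sum_mul _ _ _).symm
    _ ≤ mB B t * d := by
        refine mul_le_mul_of_nonneg_right ?_ hd
        exact Finset.single_le_sum (f := fun i' => ∑ k, ‖B i' k t‖)
          (fun i' _ => Finset.sum_nonneg fun k _ => norm_nonneg _) (Finset.mem_univ i)

lemma est {B : Fin N → Fin N → ℝ → ℂ} (hB : ∀ i k, Integrable (B i k))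
    {F : ℝ → Fin N → ℂ} (hFc : Continuous F) {d : ℝ} (hd : 0 ≤ d)
    (hFb : ∀ t k, ‖F t k‖ ≤ d) {a u r : ℝ} (hau : a ≤ u) (hur : u ≤ r) (i : Fin N) :
    ‖∫ t in u..r, appB B F i t‖ ≤ (∫ t in a..r, mB B t) * d := by
  have h1 : ‖∫ t in u..r, appB B F i t‖ ≤ ∫ t in u..r, mB B t * d := by
    refine (intervalIntegral.norm_integral_le_integral_norm hur).trans ?_
    refine intervalIntegral.integral_mono_on hur
      ((appB_int hB hFc hFb i).norm.intervalIntegrable)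
      (((mB_int hB).mul_const d).intervalIntegrable) (fun t _ => ?_)
    exact appB_le B F i t hd (fun k => hFb t k)
  refine h1.trans ?_
  rw [intervalIntegral.integral_mul_const]
  refine mul_le_mul_of_nonneg_right ?_ hd
  have h2 := intervalIntegral.integral_add_adjacent_intervals
    (μ := volume) (f := mB B) (a := a) (b := u) (c := r)
    ((mB_int hB).intervalIntegrable) ((mB_int hB).intervalIntegrable)
  have h3 : 0 ≤ ∫ t in a..u, mB B t :=
    intervalIntegral.integral_nonneg hau (fun t _ => mB_nonneg B t)
  linarith

end Volt

noncomputable section Op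
namespace Volt

abbrev XN (N : ℕ) := BoundedContinuousFunction ℝ (Fin N → ℂ)

lemma bcf_bd (F : XN N) (t : ℝ) (k : Fin N) : ‖F t k‖ ≤ ‖F‖ :=
  (norm_le_pi_norm (F t) k).trans (F.norm_coe_le_norm t)

lemma primitive_cont {E : Type*} [NormedAddCommGroup E] [NormedSpace ℝ E]
    {φ : ℝ → E} (hφ : Integrable φ) (r : ℝ) :
    Continuous fun y : ℝ => ∫ t in y..r, φ t := by
  have : (fun y : ℝ => ∫ t in y..r, φ t) = fun y => -∫ t in r..y, φ t := by
    funext y; rw [intervalIntegral.integral_symm]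
  rw [this]
  exact (hφ.continuous_primitive r).neg

variable {B : Fin N → Fin N → ℝ → ℂ}

def Traw (B : Fin N → Fin N → ℝ → ℂ) (C : XN N) (a r : ℝ) (F : XN N) : ℝ → Fin N → ℂ :=
  fun x i => C x i + ∫ t in ((x ⊔ a) ⊓ r)..r, appB B (⇑F) i t

lemma clamp_mem {a r : ℝ} (har : a ≤ r) (x : ℝ) : a ≤ ((x ⊔ a) ⊓ r) ∧ ((x ⊔ a) ⊓ r) ≤ r :=
  ⟨le_inf le_sup_right har, inf_le_right⟩

lemma clamp_cont {a r : ℝ} : Continuous fun x : ℝ => (x ⊔ a) ⊓ r :=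
  (continuous_id.sup continuous_const).inf continuous_const

lemma Traw_cont (hB : ∀ i k, Integrable (B i k)) (C : XN N) (a r : ℝ) (F : XN N) :
    Continuous (Traw B C a r F) := by
  apply continuous_pi; intro i
  refine ((continuous_apply i).comp C.continuous).add ?_
  have hint : Integrable (appB B (⇑F) i) := appB_int hB F.continuous (bcf_bd F) i
  exact (primitive_cont hint r).comp clamp_cont

lemma Traw_bd (hB : ∀ i k, Integrable (B i k)) (C : XN N) {a r : ℝ} (har : a ≤ r) (F : XN N)
    (x : ℝ) : ‖Traw B C a r F x‖ ≤ ‖C‖ + (∫ t in a..r, mB B t) * ‖F‖ := by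
  have hm : (0:ℝ) ≤ ∫ t in a..r, mB B t :=
    intervalIntegral.integral_nonneg har (fun t _ => mB_nonneg B t)
  have h0 : (0:ℝ) ≤ ‖C‖ + (∫ t in a..r, mB B t) * ‖F‖ := by positivity
  rw [pi_norm_le_iff_of_nonneg h0]
  intro i
  refine (norm_add_le _ _).trans (add_le_add ?_ ?_)
  · exact (norm_le_pi_norm (C x) i).trans (C.norm_coe_le_norm x)
  · exact est hB F.continuous (norm_nonneg F) (bcf_bd F) (clamp_mem har x).1
      (clamp_mem har x).2 i

def T (hB : ∀ i k, Integrable (B i k)) (C : XN N) {a r : ℝ} (har : a ≤ r) (F : XN N) : XN N :=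
  BoundedContinuousFunction.ofNormedAddCommGroup (Traw B C a r F) (Traw_cont hB C a r F)
    _ (Traw_bd hB C har F)

lemma T_apply (hB : ∀ i k, Integrable (B i k)) (C : XN N) {a r : ℝ} (har : a ≤ r) (F : XN N)
    (x : ℝ) (i : Fin N) :
    T hB C har F x i = C x i + ∫ t in ((x ⊔ a) ⊓ r)..r, appB B (⇑F) i t := rfl

lemma T_dist (hB : ∀ i k, Integrable (B i k)) (C : XN N) {a r : ℝ} (har : a ≤ r)
    (hsm : (∫ t in a..r, mB B t) ≤ 1/2) (F G : XN N) :
    dist (T hB C har F) (T hB C har G) ≤ (1/2) * dist F G := by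
  refine (BoundedContinuousFunction.dist_le (by positivity)).2 (fun x => ?_)
  rw [dist_eq_norm]
  have h0 : (0:ℝ) ≤ (1/2) * dist F G := by positivity
  rw [pi_norm_le_iff_of_nonneg h0]
  intro i
  have hFi : Integrable (appB B (⇑F) i) := appB_int hB F.continuous (bcf_bd F) i
  have hGi : Integrable (appB B (⇑G) i) := appB_int hB G.continuous (bcf_bd G) i
  have heq : (T hB C har F x - T hB C har G x) i
      = ∫ t in ((x ⊔ a) ⊓ r)..r, appB B (fun t => F t - G t) i t := by
    show T hB C har F x i - T hB C har G x i = _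
    rw [T_apply hB C har F x i, T_apply hB C har G x i, add_sub_add_left_eq_sub,
      ← intervalIntegral.integral_sub (hFi.intervalIntegrable) (hGi.intervalIntegrable)]
    congr 1; funext t
    simp [appB, mul_sub, Finset.sum_sub_distrib]
  rw [heq]
  have hd0 : (0:ℝ) ≤ dist F G := dist_nonneg
  have hest := est hB (F.continuous.sub G.continuous) hd0
    (fun t k => ?_) (clamp_mem har x).1 (clamp_mem har x).2 i
  · refine hest.trans ?_
    rw [mul_comm]
    refine (mul_le_mul_of_nonneg_left hsm hd0).trans_eq ?_
    ring
  · calc ‖(F t - G t) k‖ ≤ ‖F t - G t‖ := norm_le_pi_norm _ k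
      _ = dist (F t) (G t) := (dist_eq_norm _ _).symm
      _ ≤ dist F G := F.dist_coe_le_dist t

lemma vbase (hB : ∀ i k, Integrable (B i k)) (C : XN N) {a r : ℝ} (har : a ≤ r)
    (hsm : (∫ t in a..r, mB B t) ≤ 1/2) :
    ∃ F : XN N, ∀ x i, F x i = C x i + ∫ t in ((x ⊔ a) ⊓ r)..r, appB B (⇑F) i t := by
  have hco : ((1/2 : ℝ≥0) : ℝ) = 1/2 := by norm_num
  have hcw : ContractingWith (1/2 : ℝ≥0) (T hB C har) := by
    constructor
    · have h1 : ((1/2:ℝ≥0):ℝ) < 1 := by rw [hco]; norm_num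
      exact_mod_cast h1
    · refine LipschitzWith.of_dist_le_mul (fun F G => ?_)
      rw [hco]
      exact T_dist hB C har hsm F G
  refine ⟨hcw.fixedPoint (T hB C har), fun x i => ?_⟩
  conv_lhs => rw [← hcw.fixedPoint_isFixedPt]
  rfl

end Volt
end Op

noncomputable section Glue
namespace Volt
variable {N : ℕ} {B : Fin N → Fin N → ℝ → ℂ}

lemma appB_congr {F G : ℝ → Fin N → ℂ} {t : ℝ} (h : F t = G t) (i : Fin N) :
    appB B F i t = appB B G i t :=
  Finset.sum_congr rfl fun k _ => by rw [h]

lemma vind (hB : ∀ i k, Integrable (B i k)) :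
    ∀ (K : ℕ) {a r : ℝ}, a ≤ r → (∫ t in a..r, mB B t) ≤ (K : ℝ) / 2 → ∀ C : XN N,
      ∃ F : XN N, ∀ x i, F x i = C x i + ∫ t in ((x ⊔ a) ⊓ r)..r, appB B (⇑F) i t := by
  intro K
  induction K with
  | zero =>
    intro a r har hsm C
    exact vbase hB C har (hsm.trans (by norm_num))
  | succ K IH =>
    intro a r har hsm C
    by_cases hcs : (∫ t in a..r, mB B t) ≤ 1/2
    · exact vbase hB C har hcs
    push_neg at hcs
    have hcont : Continuous fun y : ℝ => ∫ t in y..r, mB B t :=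
      primitive_cont (mB_int hB) r
    have himage := intermediate_value_Icc' har hcont.continuousOn
    have hmem : (1/2 : ℝ) ∈ Icc (∫ t in r..r, mB B t) (∫ t in a..r, mB B t) := by
      rw [intervalIntegral.integral_same]
      exact ⟨by norm_num, hcs.le⟩
    obtain ⟨b, hbmem, hbeq⟩ := himage hmem
    have hab : a ≤ b := hbmem.1
    have hbr : b ≤ r := hbmem.2
    obtain ⟨F₁, hF₁⟩ := vbase hB C hbr (le_of_eq hbeq)
    set D : XN N := C + BoundedContinuousFunction.const ℝ (F₁ b - C b) with hD
    have hDx : ∀ x i, D x i = C x i + (F₁ b i - C b i) := fun x i => rfl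
    have hadj := intervalIntegral.integral_add_adjacent_intervals
      (μ := volume) (f := mB B) (a := a) (b := b) (c := r)
      ((mB_int hB).intervalIntegrable) ((mB_int hB).intervalIntegrable)
    have hsm2 : (∫ t in a..b, mB B t) ≤ (K : ℝ) / 2 := by
      have : ((K+1 : ℕ) : ℝ) = (K : ℝ) + 1 := by push_cast; ring
      rw [this] at hsm
      linarith
    obtain ⟨G, hG⟩ := IH hab hsm2 D
    have hGb : ∀ i, G b i = F₁ b i := by
      intro i
      rw [hG b i]
      have hcl : ((b ⊔ a) ⊓ b) = b := by
        rw [sup_eq_left.2 hab, min_self]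
      rw [hcl, intervalIntegral.integral_same, add_zero, hDx]
      ring
    set Fr : ℝ → Fin N → ℂ := fun x => if x ≤ b then G x else F₁ x with hFr
    have hFrcont : Continuous Fr := by
      refine Continuous.if_le G.continuous F₁.continuous continuous_id continuous_const ?_
      intro x hx
      subst hx
      exact funext hGb
    have hFrbd : ∀ x, ‖Fr x‖ ≤ max ‖G‖ ‖F₁‖ := by
      intro x
      by_cases hx : x ≤ b
      · rw [hFr]; simp only [if_pos hx]
        exact (G.norm_coe_le_norm x).trans (le_max_left _ _)
      · rw [hFr]; simp only [if_neg hx]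
        exact (F₁.norm_coe_le_norm x).trans (le_max_right _ _)
    set F : XN N := BoundedContinuousFunction.ofNormedAddCommGroup Fr hFrcont _ hFrbd with hF
    have hFcoe : ∀ x, F x = Fr x := fun x => rfl
    have hFeqG : ∀ t, t ≤ b → F t = G t := by
      intro t ht; rw [hFcoe, hFr]; simp only [if_pos ht]
    have hFeqF₁ : ∀ t, b ≤ t → F t = F₁ t := by
      intro t ht
      rw [hFcoe, hFr]
      by_cases htb : t ≤ b
      · have : t = b := le_antisymm htb ht
        subst this
        simp only [if_pos htb]
        exact funext hGb
      · simp only [if_neg htb]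
    have hFb : ∀ t k, ‖F t k‖ ≤ max ‖G‖ ‖F₁‖ := by
      intro t k
      exact (norm_le_pi_norm (F t) k).trans (hFrbd t)
    have hFint : ∀ i, Integrable (appB B (⇑F) i) :=
      fun i => appB_int hB F.continuous hFb i
    have hGint : ∀ i, Integrable (appB B (⇑G) i) :=
      fun i => appB_int hB G.continuous (bcf_bd G) i
    have hF₁int : ∀ i, Integrable (appB B (⇑F₁) i) :=
      fun i => appB_int hB F₁.continuous (bcf_bd F₁) i
    refine ⟨F, fun x i => ?_⟩
    have hbrint : ∫ t in b..r, appB B (⇑F) i t = ∫ t in b..r, appB B (⇑F₁) i t := by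
      refine intervalIntegral.integral_congr (fun t ht => ?_)
      rw [uIcc_of_le hbr] at ht
      exact appB_congr (hFeqF₁ t ht.1) i
    by_cases hxb : x ≤ b
    · -- left piece
      have hxa_b : x ⊔ a ≤ b := sup_le hxb hab
      have hxa_r : x ⊔ a ≤ r := hxa_b.trans hbr
      have hcl1 : ((x ⊔ a) ⊓ r) = x ⊔ a := inf_eq_left.2 hxa_r
      have hcl2 : ((x ⊔ a) ⊓ b) = x ⊔ a := inf_eq_left.2 hxa_b
      have hsplit := intervalIntegral.integral_add_adjacent_intervals
        (μ := volume) (f := appB B (⇑F) i) (a := x ⊔ a) (b := b) (c := r)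
        ((hFint i).intervalIntegrable) ((hFint i).intervalIntegrable)
      have habint : ∫ t in (x ⊔ a)..b, appB B (⇑F) i t
          = ∫ t in (x ⊔ a)..b, appB B (⇑G) i t := by
        refine intervalIntegral.integral_congr (fun t ht => ?_)
        rw [uIcc_of_le hxa_b] at ht
        exact appB_congr (hFeqG t ht.2) i
      have hF₁beq : F₁ b i = C b i + ∫ t in b..r, appB B (⇑F₁) i t := by
        have := hF₁ b i
        rwa [sup_idem, inf_eq_left.2 hbr] at this
      have hFx : F x i = G x i := by rw [hFeqG x hxb]
      rw [hFx, hG x i, hcl1, ← hsplit, habint, hbrint, hDx, hcl2, hF₁beq]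
      ring
    · -- right piece
      push_neg at hxb
      have hbx : b ≤ x := hxb.le
      have hclfix : ((x ⊔ b) ⊓ r) = ((x ⊔ a) ⊓ r) := by
        rw [sup_eq_left.2 hbx, sup_eq_left.2 (hab.trans hbx)]
      have hbcl : b ≤ ((x ⊔ a) ⊓ r) := le_inf (hbx.trans le_sup_left) hbr
      have hFx : F x i = F₁ x i := by rw [hFeqF₁ x hbx]
      have hint : ∫ t in ((x ⊔ a) ⊓ r)..r, appB B (⇑F₁) i t
          = ∫ t in ((x ⊔ a) ⊓ r)..r, appB B (⇑F) i t := by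
        refine intervalIntegral.integral_congr (fun t ht => ?_)
        rw [uIcc_of_le inf_le_right] at ht
        exact (appB_congr (hFeqF₁ t (hbcl.trans ht.1)) i).symm
      rw [hFx, hF₁ x i, hclfix, hint]

lemma volterra (hB : ∀ i k, Integrable (B i k)) (C : XN N) {a r : ℝ} (har : a ≤ r) :
    ∃ F : XN N, ∀ x i, F x i = C x i + ∫ t in ((x ⊔ a) ⊓ r)..r, appB B (⇑F) i t := by
  refine vind hB (⌈2 * ∫ t in a..r, mB B t⌉₊) har ?_ C
  have h1 : (2 * ∫ t in a..r, mB B t) ≤ (⌈2 * ∫ t in a..r, mB B t⌉₊ : ℝ) := Nat.le_ceil _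
  linarith

end Volt
end Glue

section MAIN
variable {n : ℕ} {A : ℕ → ℕ → ℝ → ℂ} {Y : ℕ → ℝ → ℂ}

lemma intu (hY : MemC A n Y) {h : ℕ → ℝ → ℂ} (hh : ∀ i, Integrable (h i)) {j : ℕ}
    (hj : j ≤ n) :
    IntegrableOn (fun x => (if j < n then h j x else 0) * star (Y j x)) (Icc (0:ℝ) 1) := by
  by_cases hjn : j < n
  · simp only [if_pos hjn]
    obtain ⟨c, hc⟩ := starY_bdd hY hj
    exact intmul ((hh j).restrict) (starY_meas hY hj) c hc
  · simp only [if_neg hjn, zero_mul]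
    exact integrable_zero _ _ _

lemma intvk (hA : ∀ i j, IntegrableOn (A i j) (Icc 0 1)) (hY : MemC A n Y)
    {h : ℕ → ℝ → ℂ} (hh : ∀ i, Integrable (h i)) {j : ℕ} (hj : j ≤ n) (k : ℕ) :
    IntegrableOn (fun x => (if j ≤ k+1 then (∫ s in x..(1:ℝ), h k s) * star (A k j x) else 0)
      * star (Y j x)) (Icc (0:ℝ) 1) := by
  by_cases hjk : j ≤ k+1
  · simp only [if_pos hjk]
    obtain ⟨c, hc⟩ := starY_bdd hY hj
    exact intmul (intHA hA (hh k) k j) (starY_meas hY hj) c hc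
  · simp only [if_neg hjk, zero_mul]
    exact integrable_zero _ _ _

lemma intv (hA : ∀ i j, IntegrableOn (A i j) (Icc 0 1)) (hY : MemC A n Y)
    {h : ℕ → ℝ → ℂ} (hh : ∀ i, Integrable (h i)) {j : ℕ} (hj : j ≤ n) :
    IntegrableOn (fun x => (∑ k ∈ Finset.range n,
      (if j ≤ k+1 then (∫ s in x..(1:ℝ), h k s) * star (A k j x) else 0))
      * star (Y j x)) (Icc (0:ℝ) 1) := by
  have heq : (fun x => (∑ k ∈ Finset.range n,
      (if j ≤ k+1 then (∫ s in x..(1:ℝ), h k s) * star (A k j x) else 0)) * star (Y j x))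
      = fun x => ∑ k ∈ Finset.range n,
        (if j ≤ k+1 then (∫ s in x..(1:ℝ), h k s) * star (A k j x) else 0) * star (Y j x) := by
    funext x; rw [Finset.sum_mul]
  rw [heq]
  exact integrable_finset_sum _ (fun k _ => intvk hA hY hh hj k)

lemma kint (hA : ∀ i j, IntegrableOn (A i j) (Icc 0 1)) (hY : MemC A n Y)
    {h : ℕ → ℝ → ℂ} (hh : ∀ i, Integrable (h i)) {j : ℕ} (hj : j ≤ n) :
    IntegrableOn (fun x => ((if j < n then h j x else 0)
      - ∑ k ∈ Finset.range n, (if j ≤ k+1 then (∫ s in x..(1:ℝ), h k s) * star (A k j x) else 0))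
      * star (Y j x)) (Icc (0:ℝ) 1) := by
  have heq : (fun x => ((if j < n then h j x else 0)
      - ∑ k ∈ Finset.range n, (if j ≤ k+1 then (∫ s in x..(1:ℝ), h k s) * star (A k j x) else 0))
      * star (Y j x))
      = fun x => (if j < n then h j x else 0) * star (Y j x)
        - (∑ k ∈ Finset.range n,
            (if j ≤ k+1 then (∫ s in x..(1:ℝ), h k s) * star (A k j x) else 0)) * star (Y j x) := by
    funext x; ring
  rw [heq]
  exact (intu hY hh hj).sub (intv hA hY hh hj)

lemma intW (hA : ∀ i j, IntegrableOn (A i j) (Icc 0 1))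
    {h : ℕ → ℝ → ℂ} (hh : ∀ i, Integrable (h i)) (j : ℕ) :
    IntegrableOn (fun x => ∑ k ∈ Finset.range n,
      (if j ≤ k+1 then (∫ s in x..(1:ℝ), h k s) * star (A k j x) else 0)) (Icc (0:ℝ) 1) := by
  refine integrable_finset_sum _ (fun k _ => ?_)
  by_cases hjk : j ≤ k+1
  · simp only [if_pos hjk]
    exact intHA hA (hh k) k j
  · simp only [if_neg hjk]
    exact integrable_zero _ _ _

end MAIN
theorem stmt5 (n : ℕ) (hn : 1 ≤ n) (A : ℕ → ℕ → ℝ → ℂ)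
    (hA : ∀ i j, IntegrableOn (A i j) (Set.Icc 0 1))
    (hmono : ∀ i < n, StrictMonoOn (fun x => ∫ t in (0:ℝ)..x, ‖A i (i+1) t‖) (Set.Icc 0 1)) :
    (∀ f : ℕ → ℝ → ℂ, (∀ i ≤ n, IntegrableOn (f i) (Set.Icc 0 1)) →
      ∃ g : ℝ → ℂ, ∃ μ : ℕ → ℂ, IntegrableOn g (Set.Icc 0 1) ∧
        ∀ Y : ℕ → ℝ → ℂ, MemC A n Y →
          ∑ i ∈ Finset.range (n+1), ∫ x in Set.Icc (0:ℝ) 1, f i x * star (Y i x)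
            = (∫ x in Set.Icc (0:ℝ) 1, g x * star (Y n x))
              + ∑ i ∈ Finset.range n, μ i * star (Y i 0)) ∧
    (∀ g : ℝ → ℂ, IntegrableOn g (Set.Icc 0 1) → ∀ μ : ℕ → ℂ,
      ∃ f : ℕ → ℝ → ℂ, (∀ i ≤ n, IntegrableOn (f i) (Set.Icc 0 1)) ∧
        ∀ Y : ℕ → ℝ → ℂ, MemC A n Y →
          ∑ i ∈ Finset.range (n+1), ∫ x in Set.Icc (0:ℝ) 1, f i x * star (Y i x)
            = (∫ x in Set.Icc (0:ℝ) 1, g x * star (Y n x))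
              + ∑ i ∈ Finset.range n, μ i * star (Y i 0)) := by
  constructor
  · -- part (i)
    intro f hf
    set indf : ℕ → ℝ → ℂ := fun j => (Icc (0:ℝ) 1).indicator (f j) with hindf_def
    have hindf : ∀ j, j ≤ n → Integrable (indf j) := fun j hj =>
      IntegrableOn.integrable_indicator (hf j hj) measurableSet_Icc
    set Bm : Fin n → Fin n → ℝ → ℂ := fun i k =>
      if (i:ℕ) ≤ (k:ℕ)+1 then (Icc (0:ℝ) 1).indicator (fun s => conj (A (k:ℕ) (i:ℕ) s))
      else (fun _ => 0) with hBm_def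
    have hBm : ∀ i k, Integrable (Bm i k) := by
      intro i k
      rw [hBm_def]; dsimp only
      split_ifs
      · exact IntegrableOn.integrable_indicator (integrable_conj' (hA _ _)) measurableSet_Icc
      · exact integrable_zero _ _ _
    have hCcont : Continuous (fun x => fun i : Fin n => ∫ s in x..(1:ℝ), indf (i:ℕ) s) :=
      continuous_pi fun i => cont_primitive_right (hindf (i:ℕ) i.2.le)
    have hCb : ∀ x, ‖(fun i : Fin n => ∫ s in x..(1:ℝ), indf (i:ℕ) s)‖
        ≤ ∑ i : Fin n, ∫ s, ‖indf (i:ℕ) s‖ := by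
      intro x
      have h0 : (0:ℝ) ≤ ∑ i : Fin n, ∫ s, ‖indf (i:ℕ) s‖ :=
        Finset.sum_nonneg fun i _ => integral_nonneg fun s => norm_nonneg _
      rw [pi_norm_le_iff_of_nonneg h0]
      intro i
      refine (norm_intervalIntegral_le_global (hindf (i:ℕ) i.2.le) x 1).trans ?_
      exact Finset.single_le_sum (f := fun i : Fin n => ∫ s, ‖indf (i:ℕ) s‖)
        (fun i' _ => integral_nonneg fun s => norm_nonneg _) (Finset.mem_univ i)
    obtain ⟨H, hH⟩ := Volt.volterra hBm
      (BoundedContinuousFunction.ofNormedAddCommGroup _ hCcont _ hCb) (by norm_num : (0:ℝ) ≤ 1)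
    set h : ℕ → ℝ → ℂ := fun j =>
      if hj : j < n then (fun t => indf j t + Volt.appB Bm (⇑H) ⟨j, hj⟩ t) else (fun _ => 0)
      with hh_def
    have happint : ∀ i : Fin n, Integrable (Volt.appB Bm (⇑H) i) :=
      fun i => Volt.appB_int hBm H.continuous (Volt.bcf_bd H) i
    have hh : ∀ j, Integrable (h j) := by
      intro j
      rw [hh_def]; dsimp only
      split_ifs with hj
      · exact (hindf j hj.le).add (happint _)
      · exact integrable_zero _ _ _
    have hHprim : ∀ (j : ℕ) (hj : j < n), ∀ x ∈ Icc (0:ℝ) 1,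
        (∫ s in x..(1:ℝ), h j s) = H x ⟨j, hj⟩ := by
      intro j hj x hx
      have h1 : h j = fun t => indf j t + Volt.appB Bm (⇑H) ⟨j, hj⟩ t := by
        rw [hh_def]; simp only [dif_pos hj]
      rw [h1, intervalIntegral.integral_add ((hindf j hj.le).intervalIntegrable)
        ((happint _).intervalIntegrable), hH x ⟨j, hj⟩]
      have hcl : ((x ⊔ 0) ⊓ 1) = x := by
        rw [sup_eq_left.2 hx.1, inf_eq_left.2 hx.2]
      rw [hcl]
      rfl
    have happW : ∀ (j : ℕ) (hj : j < n), ∀ x ∈ Icc (0:ℝ) 1,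
        Volt.appB Bm (⇑H) ⟨j, hj⟩ x = ∑ k ∈ Finset.range n,
          (if j ≤ k+1 then (∫ s in x..(1:ℝ), h k s) * star (A k j x) else 0) := by
      intro j hj x hx
      have hterm : ∀ k : Fin n, Bm ⟨j, hj⟩ k x * H x k
          = (fun m : ℕ => if j ≤ m+1 then (∫ s in x..(1:ℝ), h m s) * star (A m j x) else 0)
              ((k:ℕ)) := by
        intro k
        dsimp only
        have hHk : (∫ s in x..(1:ℝ), h (k:ℕ) s) = H x k := by
          have := hHprim (k:ℕ) k.2 x hx
          rwa [Fin.eta] at this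
        rw [hBm_def]
        show (if j ≤ (k:ℕ)+1 then (Icc (0:ℝ) 1).indicator (fun s => conj (A (k:ℕ) j s))
          else fun _ => 0) x * H x k
          = if j ≤ (k:ℕ)+1 then (∫ s in x..(1:ℝ), h (k:ℕ) s) * star (A (k:ℕ) j x) else 0
        by_cases hjk : j ≤ (k:ℕ)+1
        · rw [if_pos hjk, if_pos hjk, indicator_of_mem hx, ← hHk]
          exact mul_comm _ _
        · rw [if_neg hjk, if_neg hjk]
          exact zero_mul _
      calc Volt.appB Bm (⇑H) ⟨j, hj⟩ x = ∑ k : Fin n, Bm ⟨j, hj⟩ k x * H x k := rfl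
        _ = ∑ k : Fin n, (fun m : ℕ =>
              if j ≤ m+1 then (∫ s in x..(1:ℝ), h m s) * star (A m j x) else 0) ((k:ℕ)) :=
            Finset.sum_congr rfl fun k _ => hterm k
        _ = _ := by
            simpa using Fin.sum_univ_eq_sum_range
              (fun m : ℕ => if j ≤ m+1 then (∫ s in x..(1:ℝ), h m s) * star (A m j x) else 0) n
    refine ⟨fun x => f n x + ∑ k ∈ Finset.range n,
        (if n ≤ k+1 then (∫ s in x..(1:ℝ), h k s) * star (A k n x) else 0),
      fun j => ∫ x in Icc (0:ℝ) 1, h j x, ?_, ?_⟩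
    · exact (hf n le_rfl).add (intW hA hh n)
    · intro Y hY
      have hKEY := key hA h hh hY
      have hjlt : ∀ j ∈ Finset.range n,
          ∫ x in Icc (0:ℝ) 1, f j x * star (Y j x)
          = ∫ x in Icc (0:ℝ) 1, ((if j < n then h j x else 0)
              - ∑ k ∈ Finset.range n,
                (if j ≤ k+1 then (∫ s in x..(1:ℝ), h k s) * star (A k j x) else 0))
              * star (Y j x) := by
        intro j hjm
        have hj : j < n := Finset.mem_range.mp hjm
        refine (setIntegral_congr_fun measurableSet_Icc (fun x hx => ?_)).symm
        have h1 : h j x = indf j x + Volt.appB Bm (⇑H) ⟨j, hj⟩ x := by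
          rw [hh_def]; simp only [dif_pos hj]
        rw [if_pos hj, h1, happW j hj x hx]
        have h2 : indf j x = f j x := by
          rw [hindf_def]; dsimp only; rw [indicator_of_mem hx]
        rw [h2]; ring
      obtain ⟨c, hc⟩ := starY_bdd hY (le_refl n)
      have ifY : IntegrableOn (fun x => f n x * star (Y n x)) (Icc (0:ℝ) 1) :=
        intmul (hf n le_rfl) (starY_meas hY le_rfl) c hc
      have iWY : IntegrableOn (fun x => (∑ k ∈ Finset.range n,
          (if n ≤ k+1 then (∫ s in x..(1:ℝ), h k s) * star (A k n x) else 0))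
          * star (Y n x)) (Icc (0:ℝ) 1) := intv hA hY hh le_rfl
      have hgsplit : ∫ x in Icc (0:ℝ) 1, (f n x + ∑ k ∈ Finset.range n,
          (if n ≤ k+1 then (∫ s in x..(1:ℝ), h k s) * star (A k n x) else 0)) * star (Y n x)
          = (∫ x in Icc (0:ℝ) 1, f n x * star (Y n x))
            + ∫ x in Icc (0:ℝ) 1, (∑ k ∈ Finset.range n,
              (if n ≤ k+1 then (∫ s in x..(1:ℝ), h k s) * star (A k n x) else 0))
              * star (Y n x) := by
        rw [← integral_add ifY iWY]
        congr 1; funext x; ring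
      have hKn : ∫ x in Icc (0:ℝ) 1, ((if n < n then h n x else 0)
          - ∑ k ∈ Finset.range n,
            (if n ≤ k+1 then (∫ s in x..(1:ℝ), h k s) * star (A k n x) else 0))
          * star (Y n x)
          = - ∫ x in Icc (0:ℝ) 1, (∑ k ∈ Finset.range n,
            (if n ≤ k+1 then (∫ s in x..(1:ℝ), h k s) * star (A k n x) else 0))
            * star (Y n x) := by
        rw [← integral_neg]
        refine setIntegral_congr_fun measurableSet_Icc (fun x hx => ?_)
        simp only [lt_irrefl, if_false]
        ring
      rw [Finset.sum_range_succ, Finset.sum_congr rfl hjlt, hgsplit]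
      rw [Finset.sum_range_succ, hKn] at hKEY
      linear_combination hKEY
  · -- part (ii)
    intro g hg μ
    set h : ℕ → ℝ → ℂ := fun j =>
      if j < n then (Icc (0:ℝ) 1).indicator (fun _ => μ j) else (fun _ => 0) with hh_def
    have hh : ∀ j, Integrable (h j) := by
      intro j
      rw [hh_def]; dsimp only
      split_ifs with hj
      · exact IntegrableOn.integrable_indicator
          ((integrableOn_const_iff).2 (Or.inr isCompact_Icc.measure_lt_top)) measurableSet_Icc
      · exact integrable_zero _ _ _
    refine ⟨fun j => fun x => (if j < n then h j x else 0)
        - (∑ k ∈ Finset.range n,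
            (if j ≤ k+1 then (∫ s in x..(1:ℝ), h k s) * star (A k j x) else 0))
        + (if j = n then g x else 0), ?_, ?_⟩
    · intro j hjn
      refine (Integrable.sub ?_ ?_).add ?_
      · by_cases hj : j < n
        · simp only [if_pos hj]; exact (hh j).restrict
        · simp only [if_neg hj]; exact integrable_zero _ _ _
      · exact intW hA hh j
      · by_cases hj : j = n
        · simp only [if_pos hj]; exact hg
        · simp only [if_neg hj]; exact integrable_zero _ _ _
    · intro Y hY
      have hKEY := key hA h hh hY
      have hsplit : ∀ j ∈ Finset.range (n+1),
          ∫ x in Icc (0:ℝ) 1, ((if j < n then h j x else 0)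
            - (∑ k ∈ Finset.range n,
                (if j ≤ k+1 then (∫ s in x..(1:ℝ), h k s) * star (A k j x) else 0))
            + (if j = n then g x else 0)) * star (Y j x)
          = (∫ x in Icc (0:ℝ) 1, ((if j < n then h j x else 0)
              - ∑ k ∈ Finset.range n,
                (if j ≤ k+1 then (∫ s in x..(1:ℝ), h k s) * star (A k j x) else 0))
              * star (Y j x))
            + (if j = n then ∫ x in Icc (0:ℝ) 1, g x * star (Y j x) else 0) := by
        intro j hj
        have hjle : j ≤ n := by have := Finset.mem_range.mp hj; omega
        have hgY : IntegrableOn (fun x => (if j = n then g x else 0) * star (Y j x))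
            (Icc (0:ℝ) 1) := by
          by_cases hjn : j = n
          · simp only [if_pos hjn]
            obtain ⟨c, hc⟩ := starY_bdd hY hjle
            exact intmul hg (starY_meas hY hjle) c hc
          · simp only [if_neg hjn, zero_mul]
            exact integrable_zero _ _ _
        have heq : (fun x => ((if j < n then h j x else 0)
            - (∑ k ∈ Finset.range n,
                (if j ≤ k+1 then (∫ s in x..(1:ℝ), h k s) * star (A k j x) else 0))
            + (if j = n then g x else 0)) * star (Y j x))
            = fun x => ((if j < n then h j x else 0)
              - ∑ k ∈ Finset.range n,
                (if j ≤ k+1 then (∫ s in x..(1:ℝ), h k s) * star (A k j x) else 0))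
              * star (Y j x) + (if j = n then g x else 0) * star (Y j x) := by
          funext x; ring
        rw [heq, integral_add (kint hA hY hh hjle) hgY]
        congr 1
        by_cases hjn : j = n
        · simp only [if_pos hjn]
        · simp only [if_neg hjn, zero_mul, integral_zero]
      rw [Finset.sum_congr rfl hsplit, Finset.sum_add_distrib, hKEY]
      have hcol : (∑ j ∈ Finset.range (n+1),
          if j = n then ∫ x in Icc (0:ℝ) 1, g x * star (Y j x) else 0)
          = ∫ x in Icc (0:ℝ) 1, g x * star (Y n x) := by
        rw [Finset.sum_ite_eq' (Finset.range (n+1)) n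
          (fun j => ∫ x in Icc (0:ℝ) 1, g x * star (Y j x))]
        simp
      rw [hcol]
      have hμ : ∀ j ∈ Finset.range n,
          (∫ x in Icc (0:ℝ) 1, h j x) * star (Y j 0) = μ j * star (Y j 0) := by
        intro j hj
        have hjn : j < n := Finset.mem_range.mp hj
        congr 1
        have h1 : h j = (Icc (0:ℝ) 1).indicator (fun _ => μ j) := by
          rw [hh_def]; simp only [if_pos hjn]
        rw [h1, setIntegral_congr_fun measurableSet_Icc (fun x hx => indicator_of_mem hx _),
          setIntegral_const, Real.volume_real_Icc]
        norm_num
      rw [Finset.sum_congr rfl hμ]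
      ring
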